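/- Let D=(V,A) be a finite digraph, b: V → ℤ_{++} a positive integer vector, and suppose A can be partitioned into two b-branchings B_1, B_2 ⊆ A. Let b'_1, b'_2: V → ℤ_+ be vectors satisfying b'_1 ≤ b, b'_2 ≤ b, and b'_1 + b'_2 = d⁻_A (the indegree vector of A). Then A can be partitioned into two b-branchings B'_1 and B'_2 with d⁻_{B'_1} = b'_1 and d⁻_{B'_2} = b'_2 if and only if b'_1(X) < b(X) and b'_2(X) < b(X) for each source component X of D. -/

import Mathlib

open Finset
open scoped Classical Pointwise

variable {V : Type*}

/-- The indegree `d⁻_B(v)` of the vertex `v` with respect to the arc set `B`,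
i.e. the number of arcs in `B` whose head is `v`. -/
noncomputable def inDeg (B : Finset (V × V)) (v : V) : ℕ :=
  (B.filter (fun a => a.2 = v)).card

/-- `B` is a branching of the digraph `D = (V, A)`: `B ⊆ A`, every vertex has
indegree at most `1` in `B`, and the underlying undirected edge set of `B` is a
forest (equivalently, every nonempty `X ⊆ V` induces at most `|X| - 1` arcs of `B`). -/
def IsBranching (A B : Finset (V × V)) : Prop :=
  B ⊆ A ∧ (∀ v : V, inDeg B v ≤ 1) ∧
    ∀ X : Finset V, X.Nonempty →
      (B.filter (fun a => a.1 ∈ X ∧ a.2 ∈ X)).card ≤ X.card - 1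

/-- `B` is a `b`-branching of the digraph `D = (V, A)`:
`B ⊆ A`, `d⁻_B(v) ≤ b(v)` for every vertex `v`, and
`|B[X]| ≤ b(X) - 1` for every nonempty `X ⊆ V`. -/
def IsBBranching (A : Finset (V × V)) (b : V → ℕ) (B : Finset (V × V)) : Prop :=
  B ⊆ A ∧ (∀ v : V, inDeg B v ≤ b v) ∧
    ∀ X : Finset V, X.Nonempty →
      (B.filter (fun a => a.1 ∈ X ∧ a.2 ∈ X)).card ≤ (∑ v ∈ X, b v) - 1

/-- Reachability along the arcs of `A`. -/
def Reaches (A : Finset (V × V)) : V → V → Prop :=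
  Relation.ReflTransGen (fun u v => (u, v) ∈ A)

/-- `X` is a source component of the digraph `D = (V, A)`: `X` is a strongly
connected component (the set of vertices mutually reachable with some vertex `v`)
and no arc of `A` enters `X` from outside. -/
def IsSourceComponent (A : Finset (V × V)) (X : Finset V) : Prop :=
  (∃ v : V, ∀ u : V, u ∈ X ↔ Reaches A u v ∧ Reaches A v u) ∧
    ∀ a ∈ A, a.2 ∈ X → a.1 ∈ X

/-- `∂B`: the set of heads of arcs of `B`. -/
noncomputable def heads (B : Finset (V × V)) : Finset V := B.image Prod.snd

/-- `R(B) = V \ ∂B`: the set of root vertices of a branching `B`. -/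
noncomputable def roots [Fintype V] (B : Finset (V × V)) : Finset V :=
  univ \ heads B

/-- The incidence vector in `ℝ^A` of an arc subset `B ⊆ A`. -/
noncomputable def incVec (A : Finset (V × V)) (B : Finset (V × V)) :
    {a : V × V // a ∈ A} → ℝ :=
  fun a => if a.1 ∈ B then 1 else 0

namespace BBr

/-- number of arcs of `A` entering `X` from outside. -/
noncomputable def Ent (A : Finset (V × V)) (X : Finset V) : ℕ :=
  (A.filter fun a => a.2 ∈ X ∧ a.1 ∉ X).card

lemma ent_eq_sum (A : Finset (V × V)) (X : Finset V) :
    Ent A X = ∑ a ∈ A, (if a.2 ∈ X ∧ a.1 ∉ X then 1 else 0) :=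
  Finset.card_filter _ _

lemma ent_submod (A : Finset (V × V)) (X Y : Finset V) :
    Ent A (X ∩ Y) + Ent A (X ∪ Y) ≤ Ent A X + Ent A Y := by
  classical
  simp only [ent_eq_sum, ← Finset.sum_add_distrib]
  refine Finset.sum_le_sum fun a _ => ?_
  by_cases h1 : a.2 ∈ X <;> by_cases h2 : a.2 ∈ Y <;> by_cases h3 : a.1 ∈ X <;>
    by_cases h4 : a.1 ∈ Y <;>
      simp [Finset.mem_inter, Finset.mem_union, h1, h2, h3, h4]

lemma sum_inDeg (B : Finset (V × V)) (X : Finset V) :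
    ∑ v ∈ X, inDeg B v = (B.filter fun a => a.2 ∈ X).card := by
  classical
  rw [Finset.card_eq_sum_card_fiberwise (f := Prod.snd) (s := B.filter fun a => a.2 ∈ X) (t := X)
    (fun a ha => (Finset.mem_filter.mp ha).2)]
  refine Finset.sum_congr rfl fun v hv => ?_
  rw [inDeg]
  congr 1
  ext a
  simp only [Finset.mem_filter]
  constructor
  · rintro ⟨ha, h2⟩; exact ⟨⟨ha, h2 ▸ hv⟩, h2⟩
  · rintro ⟨⟨ha, _⟩, h2⟩; exact ⟨ha, h2⟩

lemma card_filter_head (A : Finset (V × V)) (X : Finset V) :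
    (A.filter fun a => a.2 ∈ X).card
      = (A.filter fun a => a.2 ∈ X ∧ a.1 ∈ X).card + Ent A X := by
  classical
  rw [Ent]
  have := Finset.card_filter_add_card_filter_not
    (s := A.filter fun a => a.2 ∈ X) (p := fun a => a.1 ∈ X)
  rw [Finset.filter_filter, Finset.filter_filter] at this
  exact this.symm

lemma ent_erase (A : Finset (V × V)) (a : V × V) (ha : a ∈ A) (X : Finset V) :
    Ent A X = Ent (A.erase a) X + (if a.2 ∈ X ∧ a.1 ∉ X then 1 else 0) := by
  classical
  rw [Ent, Ent, Finset.filter_erase]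
  by_cases h : a.2 ∈ X ∧ a.1 ∉ X
  · rw [if_pos h, Finset.card_erase_of_mem (Finset.mem_filter.mpr ⟨ha, h⟩)]
    have : 0 < (A.filter fun a => a.2 ∈ X ∧ a.1 ∉ X).card :=
      Finset.card_pos.mpr ⟨a, Finset.mem_filter.mpr ⟨ha, h⟩⟩
    omega
  · rw [if_neg h, Finset.erase_eq_of_notMem, Nat.add_zero]
    intro hmem
    exact h (Finset.mem_filter.mp hmem).2

/-- ancestors of `v` -/
noncomputable def anc [Fintype V] (A : Finset (V × V)) (v : V) : Finset V :=
  Finset.univ.filter fun u => Reaches A u v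

lemma mem_anc [Fintype V] {A : Finset (V × V)} {u v : V} :
    u ∈ anc A v ↔ Reaches A u v := by simp [anc]

lemma anc_subset_of_closed [Fintype V] {A : Finset (V × V)} {X : Finset V}
    (hcl : ∀ a ∈ A, a.2 ∈ X → a.1 ∈ X) {v : V} (hv : v ∈ X) :
    anc A v ⊆ X := by
  intro u hu
  have hr : Reaches A u v := mem_anc.mp hu
  clear hu
  induction hr using Relation.ReflTransGen.head_induction_on with
  | refl => exact hv
  | head h' _ ih => exact hcl _ h' ih

lemma anc_trans [Fintype V] {A : Finset (V × V)} {u v : V} (h : Reaches A u v) :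
    anc A u ⊆ anc A v := by
  intro w hw
  exact mem_anc.mpr ((mem_anc.mp hw).trans h)

lemma exists_sourceComponent_subset [Fintype V] (A : Finset (V × V)) (X : Finset V)
    (hne : X.Nonempty) (hcl : ∀ a ∈ A, a.2 ∈ X → a.1 ∈ X) :
    ∃ S : Finset V, S.Nonempty ∧ S ⊆ X ∧ IsSourceComponent A S := by
  classical
  obtain ⟨v, hvX, hmin⟩ := Finset.exists_min_image X (fun v => (anc A v).card) hne
  have hancX : anc A v ⊆ X := anc_subset_of_closed hcl hvX
  have hmutual : ∀ u, Reaches A u v → Reaches A v u := by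
    intro u hu
    have huX : u ∈ X := hancX (mem_anc.mpr hu)
    have hsub : anc A u ⊆ anc A v := anc_trans hu
    have heq : anc A u = anc A v :=
      Finset.eq_of_subset_of_card_le hsub (hmin u huX)
    have : v ∈ anc A u := heq ▸ mem_anc.mpr (Relation.ReflTransGen.refl)
    exact mem_anc.mp this
  refine ⟨anc A v, ⟨v, mem_anc.mpr Relation.ReflTransGen.refl⟩, hancX, ⟨⟨v, ?_⟩, ?_⟩⟩
  · intro u
    rw [mem_anc]
    exact ⟨fun h => ⟨h, hmutual u h⟩, fun h => h.1⟩
  · intro a ha h2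
    have : Reaches A a.1 v :=
      Relation.ReflTransGen.head (by simpa using ha) (mem_anc.mp h2)
    exact mem_anc.mpr this

end BBr

namespace BBr
variable {V : Type*}

/-- escape property: every nonempty subset of `W` is entered by an arc of `F`. -/
def Esc (F : Finset (V × V)) (W : Finset V) : Prop :=
  ∀ X : Finset V, X.Nonempty → X ⊆ W → ∃ a ∈ F, a.2 ∈ X ∧ a.1 ∉ X

/-- cut condition. -/
def Hc (A : Finset (V × V)) (V₁ V₂ : Finset V) : Prop :=
  ∀ X : Finset V, X.Nonempty →
    (X ⊆ V₁ → 1 ≤ Ent A X) ∧ (X ⊆ V₂ → 1 ≤ Ent A X) ∧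
    (X ⊆ V₁ → X ⊆ V₂ → 2 ≤ Ent A X)

/-- conclusion of the disjoint-branchings style lemma. -/
def Concl (A : Finset (V × V)) (V₁ V₂ : Finset V) : Prop :=
  ∃ F₁ F₂ : Finset (V × V), F₁ ⊆ A ∧ F₂ ⊆ A ∧ Disjoint F₁ F₂ ∧
    (∀ a ∈ F₁, a.2 ∈ V₁) ∧ (∀ a ∈ F₂, a.2 ∈ V₂) ∧
    (∀ v, inDeg F₁ v ≤ 1) ∧ (∀ v, inDeg F₂ v ≤ 1) ∧ Esc F₁ V₁ ∧ Esc F₂ V₂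

lemma Hc_swap {A : Finset (V × V)} {V₁ V₂ : Finset V} (h : Hc A V₁ V₂) : Hc A V₂ V₁ := by
  intro X hX
  obtain ⟨h1, h2, h3⟩ := h X hX
  exact ⟨h2, h1, fun a b => h3 b a⟩

lemma Concl_swap {A : Finset (V × V)} {V₁ V₂ : Finset V} (h : Concl A V₁ V₂) :
    Concl A V₂ V₁ := by
  obtain ⟨F₁, F₂, h1, h2, h3, h4, h5, h6, h7, h8, h9⟩ := h
  exact ⟨F₂, F₁, h2, h1, h3.symm, h5, h4, h7, h6, h9, h8⟩

lemma concl_empty (A : Finset (V × V)) {V₁ V₂ : Finset V} (h1 : V₁ = ∅) (h2 : V₂ = ∅) :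
    Concl A V₁ V₂ := by
  refine ⟨∅, ∅, Finset.empty_subset _, Finset.empty_subset _, Finset.disjoint_empty_left _,
    ?_, ?_, ?_, ?_, ?_, ?_⟩
  · intro a ha; exact absurd ha (Finset.notMem_empty a)
  · intro a ha; exact absurd ha (Finset.notMem_empty a)
  · intro v; simp [inDeg]
  · intro v; simp [inDeg]
  · intro X hX hsub
    exfalso
    obtain ⟨x, hx⟩ := hX
    exact Finset.notMem_empty x (h1 ▸ hsub hx)
  · intro X hX hsub
    exfalso
    obtain ⟨x, hx⟩ := hX
    exact Finset.notMem_empty x (h2 ▸ hsub hx)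

/-- uncrossing for tight sets -/
lemma uncross {A : Finset (V × V)} {V₁ V₂ : Finset V} (hH : Hc A V₁ V₂)
    {X X' : Finset V} (hX : X ⊆ V₂) (hX' : X' ⊆ V₂)
    (eX : Ent A X = 1) (eX' : Ent A X' = 1) (hne : (X ∩ X').Nonempty) :
    Ent A (X ∩ X') = 1 ∧ ¬(X ∩ X') ⊆ V₁ := by
  have hsub : Ent A (X ∩ X') + Ent A (X ∪ X') ≤ 2 := by
    have := ent_submod A X X'
    omega
  have hiV2 : X ∩ X' ⊆ V₂ := fun x hx => hX (Finset.mem_inter.mp hx).1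
  have huV2 : X ∪ X' ⊆ V₂ := Finset.union_subset hX hX'
  have hi1 : 1 ≤ Ent A (X ∩ X') := (hH _ hne).2.1 hiV2
  have hune : (X ∪ X').Nonempty := hne.mono (Finset.inter_subset_union)
  have hu1 : 1 ≤ Ent A (X ∪ X') := (hH _ hune).2.1 huV2
  constructor
  · omega
  · intro hsubV1
    have := (hH _ hne).2.2 hsubV1 hiV2
    omega

/-- existence of a safe grounding arc for side 1. -/
lemma exists_safe [Fintype V] {A : Finset (V × V)} {V₁ V₂ : Finset V} (hH : Hc A V₁ V₂)
    (h1 : V₁.Nonempty) :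
    ∃ a ∈ A, a.2 ∈ V₁ ∧ a.1 ∉ V₁ ∧
      ∀ X : Finset V, X ⊆ V₂ → ¬X ⊆ V₁ → a.2 ∈ X → a.1 ∉ X → Ent A X ≠ 1 := by
  classical
  by_contra hcon
  push_neg at hcon
  -- every candidate arc has a bad witness
  have hbad : ∀ a ∈ A, a.2 ∈ V₁ → a.1 ∉ V₁ →
      ∃ X : Finset V, X ⊆ V₂ ∧ ¬X ⊆ V₁ ∧ a.2 ∈ X ∧ a.1 ∉ X ∧ Ent A X = 1 := by
    intro a ha h2 h3
    obtain ⟨X, hX1, hX2, hX3, hX4, hX5⟩ := hcon a ha h2 h3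
    exact ⟨X, hX1, hX2, hX3, hX4, hX5⟩
  -- a candidate arc exists
  have hcand : ∃ a ∈ A, a.2 ∈ V₁ ∧ a.1 ∉ V₁ := by
    have := ((hH V₁ h1).1 (Finset.Subset.refl V₁))
    have hpos : 0 < (A.filter fun a => a.2 ∈ V₁ ∧ a.1 ∉ V₁).card := by
      rw [← Ent]; omega
    obtain ⟨a, ha⟩ := Finset.card_pos.mp hpos
    obtain ⟨ha1, ha2, ha3⟩ := Finset.mem_filter.mp ha
    exact ⟨a, ha1, ha2, ha3⟩
  -- the family of tight witness sets
  set T : Finset (Finset V) := (Finset.univ : Finset V).powerset.filter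
    (fun X => X ⊆ V₂ ∧ ¬X ⊆ V₁ ∧ Ent A X = 1 ∧
      ∃ a ∈ A, a.2 ∈ X ∧ a.1 ∉ X ∧ a.2 ∈ V₁ ∧ a.1 ∉ V₁) with hT
  have hTmem : ∀ X : Finset V, X ∈ T ↔ (X ⊆ V₂ ∧ ¬X ⊆ V₁ ∧ Ent A X = 1 ∧
      ∃ a ∈ A, a.2 ∈ X ∧ a.1 ∉ X ∧ a.2 ∈ V₁ ∧ a.1 ∉ V₁) := by
    intro X
    simp [hT, Finset.mem_filter, Finset.mem_powerset]
  have hTne : T.Nonempty := by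
    obtain ⟨a, ha, h2, h3⟩ := hcand
    obtain ⟨X, hX1, hX2, hX3, hX4, hX5⟩ := hbad a ha h2 h3
    exact ⟨X, (hTmem X).mpr ⟨hX1, hX2, hX5, a, ha, hX3, hX4, h2, h3⟩⟩
  obtain ⟨X₀, hX₀T, hX₀min⟩ := Finset.exists_min_image T Finset.card hTne
  obtain ⟨hX₀V2, hX₀nV1, hX₀ent, a₀, ha₀A, ha₀2, ha₀1, ha₀2V, ha₀1V⟩ := (hTmem X₀).mp hX₀T
  -- Y = V₁ ∩ X₀ needs at least two entering arcs
  set Y : Finset V := V₁ ∩ X₀ with hY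
  have hYne : Y.Nonempty := ⟨a₀.2, Finset.mem_inter.mpr ⟨ha₀2V, ha₀2⟩⟩
  have hYV1 : Y ⊆ V₁ := Finset.inter_subset_left
  have hYV2 : Y ⊆ V₂ := fun x hx => hX₀V2 (Finset.mem_inter.mp hx).2
  have hY2 : 2 ≤ Ent A Y := (hH Y hYne).2.2 hYV1 hYV2
  have htwo : 1 < (A.filter fun e => e.2 ∈ Y ∧ e.1 ∉ Y).card := by rw [← Ent]; omega
  obtain ⟨e₁, e₂, he₁, he₂, hne12⟩ := Finset.one_lt_card_iff.mp htwo
  -- every arc entering Y also enters X₀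
  have hkey : ∀ e : V × V, e ∈ A → e.2 ∈ Y → e.1 ∉ Y →
      e ∈ A.filter fun x => x.2 ∈ X₀ ∧ x.1 ∉ X₀ := by
    intro e heA he2 he1
    have he2X₀ : e.2 ∈ X₀ := (Finset.mem_inter.mp he2).2
    have he2V1 : e.2 ∈ V₁ := (Finset.mem_inter.mp he2).1
    by_cases hs : e.1 ∈ X₀
    · -- tail inside X₀, outside V₁ : derive contradiction via minimality
      exfalso
      have hsV1 : e.1 ∉ V₁ := by
        intro hin
        exact he1 (Finset.mem_inter.mpr ⟨hin, hs⟩)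
      obtain ⟨X', hX'1, hX'2, hX'3, hX'4, hX'5⟩ := hbad e heA he2V1 hsV1
      have hZne : (X₀ ∩ X').Nonempty := ⟨e.2, Finset.mem_inter.mpr ⟨he2X₀, hX'3⟩⟩
      obtain ⟨hZent, hZnV1⟩ := uncross hH hX₀V2 hX'1 hX₀ent hX'5 hZne
      have hZT : X₀ ∩ X' ∈ T := (hTmem _).mpr
        ⟨fun x hx => hX₀V2 (Finset.mem_inter.mp hx).1, hZnV1, hZent,
          e, heA, Finset.mem_inter.mpr ⟨he2X₀, hX'3⟩,
          (fun hmem => hX'4 (Finset.mem_inter.mp hmem).2), he2V1, hsV1⟩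
      have heq : X₀ ∩ X' = X₀ :=
        Finset.eq_of_subset_of_card_le Finset.inter_subset_left (hX₀min _ hZT)
      have h5 : e.1 ∈ X₀ ∩ X' := heq.symm ▸ hs
      exact hX'4 (Finset.mem_inter.mp h5).2
    · exact Finset.mem_filter.mpr ⟨heA, he2X₀, hs⟩
  have hc1 : (A.filter fun x => x.2 ∈ X₀ ∧ x.1 ∉ X₀).card = 1 := hX₀ent
  obtain ⟨hA1, hY1, hZ1⟩ := Finset.mem_filter.mp he₁
  obtain ⟨hA2, hY2', hZ2⟩ := Finset.mem_filter.mp he₂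
  have m1 := hkey e₁ hA1 hY1 hZ1
  have m2 := hkey e₂ hA2 hY2' hZ2
  exact hne12 (Finset.card_le_one.mp (le_of_eq hc1) _ m1 _ m2)

end BBr

namespace BBr
variable {V : Type*}

lemma Hc_step [Fintype V] {A : Finset (V × V)} {V₁ V₂ : Finset V} {a : V × V}
    (ha : a ∈ A) (h2 : a.2 ∈ V₁) (h1 : a.1 ∉ V₁)
    (hsafe : ∀ X : Finset V, X ⊆ V₂ → ¬X ⊆ V₁ → a.2 ∈ X → a.1 ∉ X → Ent A X ≠ 1)
    (hH : Hc A V₁ V₂) : Hc (A.erase a) (V₁.erase a.2) V₂ := by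
  intro X hX
  obtain ⟨hH1, hH2, hH3⟩ := hH X hX
  have hee := ent_erase A a ha X
  refine ⟨?_, ?_, ?_⟩
  · intro hsub
    have hXV1 : X ⊆ V₁ := hsub.trans (Finset.erase_subset _ _)
    have hnot : a.2 ∉ X := fun hmem => (Finset.mem_erase.mp (hsub hmem)).1 rfl
    have h1' := hH1 hXV1
    rw [if_neg (fun h => hnot h.1)] at hee
    omega
  · intro hsub
    have h2' := hH2 hsub
    by_cases henter : a.2 ∈ X ∧ a.1 ∉ X
    · rw [if_pos henter] at hee
      by_cases hXV1 : X ⊆ V₁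
      · have := hH3 hXV1 hsub
        omega
      · have := hsafe X hsub hXV1 henter.1 henter.2
        omega
    · rw [if_neg henter] at hee
      omega
  · intro hsub1 hsub2
    have hXV1 : X ⊆ V₁ := hsub1.trans (Finset.erase_subset _ _)
    have hnot : a.2 ∉ X := fun hmem => (Finset.mem_erase.mp (hsub1 hmem)).1 rfl
    have := hH3 hXV1 hsub2
    rw [if_neg (fun h => hnot h.1)] at hee
    omega

lemma concl_step {A : Finset (V × V)} {V₁ V₂ : Finset V} {a : V × V}
    (ha : a ∈ A) (h2 : a.2 ∈ V₁) (h1 : a.1 ∉ V₁)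
    (hc : Concl (A.erase a) (V₁.erase a.2) V₂) : Concl A V₁ V₂ := by
  classical
  obtain ⟨F₁, F₂, hF1A, hF2A, hdisj, hh1, hh2, hd1, hd2, he1, he2⟩ := hc
  have haF1 : a ∉ F₁ := fun hmem => (Finset.mem_erase.mp (hF1A hmem)).1 rfl
  have haF2 : a ∉ F₂ := fun hmem => (Finset.mem_erase.mp (hF2A hmem)).1 rfl
  have hF1heads : ∀ x ∈ F₁, x.2 ≠ a.2 := by
    intro x hx
    exact (Finset.mem_erase.mp (hh1 x hx)).1
  refine ⟨insert a F₁, F₂, ?_, hF2A.trans (Finset.erase_subset _ _), ?_, ?_, hh2, ?_, hd2, ?_, he2⟩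
  · exact Finset.insert_subset ha (hF1A.trans (Finset.erase_subset _ _))
  · rw [Finset.disjoint_insert_left]
    exact ⟨haF2, hdisj⟩
  · intro x hx
    rcases Finset.mem_insert.mp hx with h | h
    · rw [h]; exact h2
    · exact (Finset.erase_subset _ _) (hh1 x h)
  · intro v
    rw [inDeg, Finset.filter_insert]
    by_cases hv : a.2 = v
    · rw [if_pos hv]
      have : F₁.filter (fun x => x.2 = v) = ∅ := by
        rw [Finset.filter_eq_empty_iff]
        intro x hx
        rw [← hv]
        exact hF1heads x hx
      rw [this]
      simp
    · rw [if_neg hv]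
      exact hd1 v
  · intro X hXne hXsub
    by_cases hv : a.2 ∈ X
    · exact ⟨a, Finset.mem_insert_self _ _, hv, fun hmem => h1 (hXsub hmem)⟩
    · have hXsub' : X ⊆ V₁.erase a.2 := by
        intro x hx
        exact Finset.mem_erase.mpr ⟨fun heq => hv (heq ▸ hx), hXsub hx⟩
      obtain ⟨x, hx1, hx2, hx3⟩ := he1 X hXne hXsub'
      exact ⟨x, Finset.mem_insert_of_mem hx1, hx2, hx3⟩

lemma edmonds [Fintype V] :
    ∀ (n : ℕ) (A : Finset (V × V)) (V₁ V₂ : Finset V),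
      V₁.card + V₂.card ≤ n → Hc A V₁ V₂ → Concl A V₁ V₂ := by
  intro n
  induction n with
  | zero =>
    intro A V₁ V₂ hcard _
    have h1 : V₁ = ∅ := Finset.card_eq_zero.mp (by omega)
    have h2 : V₂ = ∅ := Finset.card_eq_zero.mp (by omega)
    exact concl_empty A h1 h2
  | succ n ih =>
    intro A V₁ V₂ hcard hH
    rcases V₁.eq_empty_or_nonempty with h1 | h1
    · rcases V₂.eq_empty_or_nonempty with h2 | h2
      · exact concl_empty A h1 h2
      · -- side 2 step (swap)
        obtain ⟨a, ha, ha2, ha1, hsafe⟩ := exists_safe (Hc_swap hH) h2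
        have hH' := Hc_step ha ha2 ha1 hsafe (Hc_swap hH)
        have hcard' : (V₂.erase a.2).card + V₁.card ≤ n := by
          rw [Finset.card_erase_of_mem ha2]
          have : 0 < V₂.card := Finset.card_pos.mpr h2
          omega
        have hc := ih (A.erase a) (V₂.erase a.2) V₁ hcard' hH'
        exact Concl_swap (concl_step ha ha2 ha1 hc)
    · -- side 1 step
      obtain ⟨a, ha, ha2, ha1, hsafe⟩ := exists_safe hH h1
      have hH' := Hc_step ha ha2 ha1 hsafe hH
      have hcard' : (V₁.erase a.2).card + V₂.card ≤ n := by
        rw [Finset.card_erase_of_mem ha2]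
        have : 0 < V₁.card := Finset.card_pos.mpr h1
        omega
      have hc := ih (A.erase a) (V₁.erase a.2) V₂ hcard' hH'
      exact concl_step ha ha2 ha1 hc

end BBr

namespace BBr
variable {V : Type*}

lemma spars {B : Finset (V × V)} {b c : V → ℕ}
    (hdeg : ∀ v, inDeg B v = c v) (hcb : ∀ v, c v ≤ b v)
    (hesc : ∀ X : Finset V, X.Nonempty → (∀ v ∈ X, c v = b v) →
      ∃ a ∈ B, a.2 ∈ X ∧ a.1 ∉ X) :
    ∀ X : Finset V, X.Nonempty →
      (B.filter fun a => a.1 ∈ X ∧ a.2 ∈ X).card ≤ (∑ v ∈ X, b v) - 1 := by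
  classical
  intro X hX
  have hcardI : (B.filter fun a => a.2 ∈ X).card = ∑ v ∈ X, c v := by
    rw [← sum_inDeg]
    exact Finset.sum_congr rfl fun v _ => hdeg v
  have hsubI : (B.filter fun a => a.1 ∈ X ∧ a.2 ∈ X) ⊆ B.filter fun a => a.2 ∈ X := by
    intro a ha
    obtain ⟨h1, h2, h3⟩ := Finset.mem_filter.mp ha
    exact Finset.mem_filter.mpr ⟨h1, h3⟩
  by_cases hall : ∀ v ∈ X, c v = b v
  · obtain ⟨a, haB, ha2, ha1⟩ := hesc X hX hall
    have haI : a ∈ B.filter fun x => x.2 ∈ X := Finset.mem_filter.mpr ⟨haB, ha2⟩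
    have hsub2 : (B.filter fun x => x.1 ∈ X ∧ x.2 ∈ X)
        ⊆ (B.filter fun x => x.2 ∈ X).erase a :=
      Finset.subset_erase.mpr ⟨hsubI, fun hmem => ha1 (Finset.mem_filter.mp hmem).2.1⟩
    have hcard2 := Finset.card_le_card hsub2
    rw [Finset.card_erase_of_mem haI] at hcard2
    have hsums : ∑ v ∈ X, c v = ∑ v ∈ X, b v := Finset.sum_congr rfl hall
    omega
  · push_neg at hall
    obtain ⟨v₀, hv₀, hne⟩ := hall
    have hlt : ∑ v ∈ X, c v < ∑ v ∈ X, b v :=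
      Finset.sum_lt_sum (fun i _ => hcb i) ⟨v₀, hv₀, lt_of_le_of_ne (hcb v₀) hne⟩
    have := Finset.card_le_card hsubI
    omega

end BBr

/-- Suppose `A` is partitioned into two `b`-branchings, and
`b₁', b₂' ≤ b` with `b₁' + b₂' = d⁻_A`. Then `A` can be partitioned into two
`b`-branchings with indegree vectors `b₁'` and `b₂'` iff `b₁'(X) < b(X)` and
`b₂'(X) < b(X)` for every source component `X`. -/
theorem bBranching_partition_prescribed_indegrees
    {V : Type*} [Fintype V] (A : Finset (V × V)) (b : V → ℕ) (hb : ∀ v, 0 < b v)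
    (hpart : ∃ B₁ B₂ : Finset (V × V),
      IsBBranching A b B₁ ∧ IsBBranching A b B₂ ∧ Disjoint B₁ B₂ ∧ B₁ ∪ B₂ = A)
    (b₁' b₂' : V → ℕ)
    (hb₁ : ∀ v, b₁' v ≤ b v) (hb₂ : ∀ v, b₂' v ≤ b v)
    (hsum : ∀ v, b₁' v + b₂' v = inDeg A v) :
    (∃ B₁' B₂' : Finset (V × V),
      IsBBranching A b B₁' ∧ IsBBranching A b B₂' ∧ Disjoint B₁' B₂' ∧
      B₁' ∪ B₂' = A ∧ (∀ v, inDeg B₁' v = b₁' v) ∧ ∀ v, inDeg B₂' v = b₂' v) ↔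
    ∀ X : Finset V, IsSourceComponent A X →
      (∑ v ∈ X, b₁' v) < (∑ v ∈ X, b v) ∧ (∑ v ∈ X, b₂' v) < (∑ v ∈ X, b v) := by
  classical
  constructor
  · -- forward direction
    rintro ⟨B₁, B₂, hB1, hB2, hdisj, hun, hdeg1, hdeg2⟩ X hX
    obtain ⟨⟨v, hv⟩, hclosed⟩ := hX
    have hvX : v ∈ X := (hv v).mpr ⟨Relation.ReflTransGen.refl, Relation.ReflTransGen.refl⟩
    have hbX : 1 ≤ ∑ u ∈ X, b u :=
      le_trans (hb v) (Finset.single_le_sum (fun i _ => Nat.zero_le _) hvX)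
    have key : ∀ (B : Finset (V × V)) (c : V → ℕ), IsBBranching A b B →
        (∀ u, inDeg B u = c u) → (∑ u ∈ X, c u) < ∑ u ∈ X, b u := by
      intro B c hB hdeg
      have h1 : ∑ u ∈ X, c u = (B.filter fun a => a.2 ∈ X).card := by
        rw [← BBr.sum_inDeg]
        exact Finset.sum_congr rfl fun u _ => (hdeg u).symm
      have h2 : B.filter (fun a => a.2 ∈ X) = B.filter (fun a => a.1 ∈ X ∧ a.2 ∈ X) := by
        ext a
        simp only [Finset.mem_filter]
        constructor
        · rintro ⟨haB, h⟩; exact ⟨haB, hclosed a (hB.1 haB) h, h⟩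
        · rintro ⟨haB, _, h⟩; exact ⟨haB, h⟩
      have h3 := hB.2.2 X ⟨v, hvX⟩
      rw [h1, h2]
      omega
    exact ⟨key B₁ b₁' hB1 hdeg1, key B₂ b₂' hB2 hdeg2⟩
  · -- backward direction
    intro hsrc
    obtain ⟨B₁, B₂, hB1, hB2, hdisjP, hunP⟩ := hpart
    set V₁ : Finset V := Finset.univ.filter (fun v => b₁' v = b v) with hV₁
    set V₂ : Finset V := Finset.univ.filter (fun v => b₂' v = b v) with hV₂
    have hmemV₁ : ∀ v : V, v ∈ V₁ ↔ b₁' v = b v := by intro v; simp [hV₁]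
    have hmemV₂ : ∀ v : V, v ∈ V₂ ↔ b₂' v = b v := by intro v; simp [hV₂]
    -- the cut condition
    have hent1 : ∀ (W : Finset V) (c : V → ℕ), (∀ v, v ∈ W ↔ c v = b v) →
        (∀ S : Finset V, IsSourceComponent A S → (∑ v ∈ S, c v) < ∑ v ∈ S, b v) →
        ∀ X : Finset V, X.Nonempty → X ⊆ W → 1 ≤ BBr.Ent A X := by
      intro W c hmem hsrcW X hXne hsub
      by_contra hcon
      have h0 : (A.filter fun a => a.2 ∈ X ∧ a.1 ∉ X) = ∅ := by
        rw [← Finset.card_eq_zero]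
        have : BBr.Ent A X = (A.filter fun a => a.2 ∈ X ∧ a.1 ∉ X).card := rfl
        omega
      have hcl : ∀ a ∈ A, a.2 ∈ X → a.1 ∈ X := by
        intro a ha h2
        by_contra h1
        have : a ∈ A.filter (fun a => a.2 ∈ X ∧ a.1 ∉ X) :=
          Finset.mem_filter.mpr ⟨ha, h2, h1⟩
        rw [h0] at this
        exact Finset.notMem_empty a this
      obtain ⟨S, hSne, hSX, hSsrc⟩ := BBr.exists_sourceComponent_subset A X hXne hcl
      have hlt := hsrcW S hSsrc
      have heq : ∑ v ∈ S, c v = ∑ v ∈ S, b v :=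
        Finset.sum_congr rfl fun v hv => (hmem v).mp (hsub (hSX hv))
      omega
    have hHc : BBr.Hc A V₁ V₂ := by
      intro X hXne
      refine ⟨fun hs => hent1 V₁ b₁' hmemV₁ (fun S hS => (hsrc S hS).1) X hXne hs,
        fun hs => hent1 V₂ b₂' hmemV₂ (fun S hS => (hsrc S hS).2) X hXne hs, ?_⟩
      intro hs1 hs2
      have hA2 : ∑ v ∈ X, inDeg A v = (A.filter fun a => a.2 ∈ X).card := BBr.sum_inDeg A X
      have hsplit := BBr.card_filter_head A X
      have hfeq : (A.filter fun a => a.2 ∈ X ∧ a.1 ∈ X)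
          = (A.filter fun a => a.1 ∈ X ∧ a.2 ∈ X) :=
        Finset.filter_congr fun a _ => by tauto
      have hfilter : (A.filter fun a => a.1 ∈ X ∧ a.2 ∈ X)
          = (B₁.filter fun a => a.1 ∈ X ∧ a.2 ∈ X) ∪ (B₂.filter fun a => a.1 ∈ X ∧ a.2 ∈ X) := by
        rw [← hunP, Finset.filter_union]
      have hdisjF : Disjoint (B₁.filter fun a => a.1 ∈ X ∧ a.2 ∈ X)
          (B₂.filter fun a => a.1 ∈ X ∧ a.2 ∈ X) :=
        hdisjP.mono (Finset.filter_subset _ _) (Finset.filter_subset _ _)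
      have hcardU : (A.filter fun a => a.1 ∈ X ∧ a.2 ∈ X).card
          = (B₁.filter fun a => a.1 ∈ X ∧ a.2 ∈ X).card
            + (B₂.filter fun a => a.1 ∈ X ∧ a.2 ∈ X).card := by
        rw [hfilter, Finset.card_union_of_disjoint hdisjF]
      have hb1c := hB1.2.2 X hXne
      have hb2c := hB2.2.2 X hXne
      have hsumdeg : ∑ v ∈ X, inDeg A v = (∑ v ∈ X, b v) + ∑ v ∈ X, b v := by
        rw [← Finset.sum_add_distrib]
        refine Finset.sum_congr rfl fun v hv => ?_
        rw [← hsum v, (hmemV₁ v).mp (hs1 hv), (hmemV₂ v).mp (hs2 hv)]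
      have hbX : 1 ≤ ∑ v ∈ X, b v := by
        obtain ⟨v, hv⟩ := hXne
        exact le_trans (hb v) (Finset.single_le_sum (fun i _ => Nat.zero_le _) hv)
      rw [hfeq] at hsplit
      omega
    -- apply the disjoint escape-system lemma
    obtain ⟨F₁, F₂, hF1A, hF2A, hFdisj, hFh1, hFh2, hFd1, hFd2, hFe1, hFe2⟩ :=
      BBr.edmonds (V₁.card + V₂.card) A V₁ V₂ le_rfl hHc
    -- fill in the remaining arcs
    have hchoice : ∀ v : V, ∃ S : Finset (V × V), (F₁.filter fun a => a.2 = v) ⊆ S ∧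
        S ⊆ (A.filter fun a => a.2 = v) \ F₂ ∧ S.card = b₁' v := by
      intro v
      have hIn : (A.filter fun a => a.2 = v).card = b₁' v + b₂' v := (hsum v).symm
      have hkey : ∀ (F : Finset (V × V)) (W : Finset V) (c : V → ℕ),
          F ⊆ A → (∀ a ∈ F, a.2 ∈ W) → (∀ u, inDeg F u ≤ 1) →
          (∀ u, u ∈ W ↔ c u = b u) → (F.filter fun a => a.2 = v).card ≤ c v := by
        intro F W c hFA hFh hFd hmem
        rcases Finset.eq_empty_or_nonempty (F.filter fun a => a.2 = v) with he | hne
        · simp [he]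
        · obtain ⟨x, hx⟩ := hne
          obtain ⟨hxF, hx2⟩ := Finset.mem_filter.mp hx
          have hw : x.2 ∈ W := hFh x hxF
          have hcv : c v = b v := (hmem v).mp (hx2 ▸ hw)
          have hd := hFd v
          have := hb v
          rw [inDeg] at hd
          omega
      have h1 := hkey F₁ V₁ b₁' hF1A hFh1 hFd1 hmemV₁
      have h2 := hkey F₂ V₂ b₂' hF2A hFh2 hFd2 hmemV₂
      have hsub0 : (F₁.filter fun a => a.2 = v) ⊆ (A.filter fun a => a.2 = v) \ F₂ := by
        intro x hx
        obtain ⟨hxF, hx2⟩ := Finset.mem_filter.mp hx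
        refine Finset.mem_sdiff.mpr ⟨Finset.mem_filter.mpr ⟨hF1A hxF, hx2⟩, fun hmem => ?_⟩
        exact (Finset.disjoint_left.mp hFdisj) hxF hmem
      have hIF2 : (A.filter fun a => a.2 = v) ∩ F₂ = F₂.filter fun a => a.2 = v := by
        ext x
        simp only [Finset.mem_inter, Finset.mem_filter]
        exact ⟨fun ⟨⟨_, h2⟩, hF⟩ => ⟨hF, h2⟩, fun ⟨hF, h2⟩ => ⟨⟨hF2A hF, h2⟩, hF⟩⟩
      have hcs : ((A.filter fun a => a.2 = v) \ F₂).card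
            + ((A.filter fun a => a.2 = v) ∩ F₂).card = (A.filter fun a => a.2 = v).card :=
        Finset.card_sdiff_add_card_inter _ _
      rw [hIF2] at hcs
      obtain ⟨C, hC1, hC2, hC3⟩ := Finset.exists_subsuperset_card_eq
        hsub0 (by omega) (by omega)
      exact ⟨C, hC1, hC2, by omega⟩
    choose S hS1 hS2 hS3 using hchoice
    set B₁' : Finset (V × V) := A.filter (fun a => a ∈ S a.2) with hB₁'
    set B₂' : Finset (V × V) := A \ B₁' with hB₂'
    have hfB1 : ∀ v : V, B₁'.filter (fun a => a.2 = v) = S v := by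
      intro v
      ext a
      simp only [hB₁', Finset.mem_filter]
      constructor
      · rintro ⟨⟨haA, haS⟩, h2⟩
        exact h2 ▸ haS
      · intro haS
        have := hS2 a.2
        have h2 : a.2 = v := by
          have hmem := Finset.mem_sdiff.mp ((hS2 v) haS)
          exact (Finset.mem_filter.mp hmem.1).2
        have haA : a ∈ A := by
          have hmem := Finset.mem_sdiff.mp ((hS2 v) haS)
          exact (Finset.mem_filter.mp hmem.1).1
        exact ⟨⟨haA, h2 ▸ haS⟩, h2⟩
    have hdeg1 : ∀ v, inDeg B₁' v = b₁' v := by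
      intro v
      rw [inDeg, hfB1 v, hS3 v]
    have hsubA1 : B₁' ⊆ A := Finset.filter_subset _ _
    have hdeg2 : ∀ v, inDeg B₂' v = b₂' v := by
      intro v
      have hfB2 : B₂'.filter (fun a => a.2 = v)
          = (A.filter fun a => a.2 = v) \ (B₁'.filter fun a => a.2 = v) := by
        ext a
        simp only [hB₂', Finset.mem_filter, Finset.mem_sdiff]
        tauto
      have hsub : B₁'.filter (fun a => a.2 = v) ⊆ A.filter (fun a => a.2 = v) :=
        Finset.filter_subset_filter _ hsubA1
      rw [inDeg, hfB2, Finset.card_sdiff_of_subset hsub]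
      have h1 := hdeg1 v
      rw [inDeg] at h1
      have h2 := hsum v
      rw [inDeg] at h2
      omega
    have hF1B1 : F₁ ⊆ B₁' := by
      intro a ha
      refine Finset.mem_filter.mpr ⟨hF1A ha, ?_⟩
      exact (hS1 a.2) (Finset.mem_filter.mpr ⟨ha, rfl⟩)
    have hB1F2 : ∀ a ∈ B₁', a ∉ F₂ := by
      intro a ha hmem
      have haS : a ∈ S a.2 := (Finset.mem_filter.mp ha).2
      have := Finset.mem_sdiff.mp ((hS2 a.2) haS)
      exact this.2 hmem
    have hF2B2 : F₂ ⊆ B₂' := by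
      intro a ha
      refine Finset.mem_sdiff.mpr ⟨hF2A ha, fun hmem => hB1F2 a hmem ha⟩
    -- assemble
    refine ⟨B₁', B₂', ⟨hsubA1, fun v => (hdeg1 v) ▸ hb₁ v, ?_⟩,
      ⟨Finset.sdiff_subset, fun v => (hdeg2 v) ▸ hb₂ v, ?_⟩,
      Finset.disjoint_sdiff, Finset.union_sdiff_of_subset hsubA1, hdeg1, hdeg2⟩
    · refine BBr.spars hdeg1 hb₁ ?_
      intro X hXne hall
      have hXsub : X ⊆ V₁ := fun v hv => (hmemV₁ v).mpr (hall v hv)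
      obtain ⟨a, haF, h2, h1⟩ := hFe1 X hXne hXsub
      exact ⟨a, hF1B1 haF, h2, h1⟩
    · refine BBr.spars hdeg2 hb₂ ?_
      intro X hXne hall
      have hXsub : X ⊆ V₂ := fun v hv => (hmemV₂ v).mpr (hall v hv)
      obtain ⟨a, haF, h2, h1⟩ := hFe2 X hXne hXsub
      exact ⟨a, hF2B2 haF, h2, h1⟩
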